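/- arXiv:2405.06349 — 3 statements merged into one kernel-verified Lean document; each statement's English description precedes it below -/
import Mathlib

section
/- Define V(x) = x·(H(x) − log x − γ + 2) − (1/2)·log x + ∑_{n=1}^{⌊x⌋} log n − ⌊x⌋·(1 + log x) − (1/2)·log(2π) − 1/2 for x > 0. Then for every x > 0 one has V(x) = ∫_{x}^{∞} R₁(t) dt, and for every r > 0 one has ∫_{r}^{∞} S₁(t) dt = ∑_{n=1}^{∞} V(nr)/n. -/
open Real MeasureTheory Filter Topology

/-- Harmonic sum `H(x) = ∑_{k=1}^{⌊x⌋} 1/k`. -/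
noncomputable def H (x : ℝ) : ℝ := ∑ k ∈ Finset.Icc 1 ⌊x⌋₊, (1 : ℝ) / k

/-- `R₁(x) = log x + γ − H(x) − ({x} − 1/2)/x`. -/
noncomputable def R1 (x : ℝ) : ℝ :=
  Real.log x + Real.eulerMascheroniConstant - H x - (Int.fract x - 1/2) / x

/-- `S₁(x) = ∑_{k≥1} R₁(kx)`. -/
noncomputable def S1 (x : ℝ) : ℝ := ∑' k : ℕ, R1 ((k + 1) * x)

/-- `V(x) = x(H(x) − log x − γ + 2) − ½ log x + ∑_{n≤x} log n − ⌊x⌋(1 + log x) − ½ log 2π − ½`. -/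
noncomputable def V (x : ℝ) : ℝ :=
  x * (H x - Real.log x - Real.eulerMascheroniConstant + 2) - (1/2) * Real.log x
    + (∑ n ∈ Finset.Icc 1 ⌊x⌋₊, Real.log n) - (⌊x⌋₊ : ℝ) * (1 + Real.log x)
    - (1/2) * Real.log (2 * Real.pi) - 1/2

namespace VProofAux


noncomputable def Hn (m : ℕ) : ℝ := ∑ k ∈ Finset.Icc 1 m, (1 : ℝ) / k

lemma H_eq (x : ℝ) : H x = Hn ⌊x⌋₊ := rfl

lemma Hn_eq_harmonic (m : ℕ) : Hn m = (harmonic m : ℝ) := by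
  rw [Hn, harmonic_eq_sum_Icc]
  push_cast
  simp [one_div]

lemma Hn_succ (m : ℕ) : Hn (m + 1) = Hn m + 1 / (m + 1) := by
  rw [Hn, Hn, Finset.sum_Icc_succ_top (Nat.le_add_left 1 m)]
  push_cast; ring

lemma floor_eq_of_Ico {m : ℕ} {t : ℝ} (h1 : (m : ℝ) ≤ t) (h2 : t < m + 1) : ⌊t⌋₊ = m := by
  rw [Nat.floor_eq_iff (le_trans (Nat.cast_nonneg m) h1)]
  exact ⟨h1, h2⟩

lemma fract_eq_of_Ico {m : ℕ} {t : ℝ} (h1 : (m : ℝ) ≤ t) (h2 : t < m + 1) :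
    Int.fract t = t - m := by
  have : ⌊t⌋ = (m : ℤ) := by
    rw [Int.floor_eq_iff]
    constructor <;> push_cast <;> [exact h1; exact h2]
  rw [Int.fract, this]; push_cast; ring

lemma R1_formula {m : ℕ} {t : ℝ} (ht : 0 < t) (h1 : (m : ℝ) ≤ t) (h2 : t ≤ m + 1) :
    R1 t = Real.log t + eulerMascheroniConstant - Hn m - 1 + (m + 1/2) / t := by
  rcases lt_or_eq_of_le h2 with h2 | h2
  · rw [R1, H_eq, floor_eq_of_Ico h1 h2, fract_eq_of_Ico h1 h2]
    field_simp
    ring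
  · subst h2
    have hm1 : ((m : ℝ) + 1) = ((m + 1 : ℕ) : ℝ) := by push_cast; ring
    rw [R1, H_eq, hm1, Nat.floor_natCast, Int.fract_natCast, Hn_succ]
    have : ((m : ℝ) + 1) ≠ 0 := by positivity
    push_cast
    field_simp
    ring



noncomputable def a (k : ℕ) : ℝ := 1/(2*k) + 1/(2*(k+1)) - (Real.log (k+1) - Real.log k)

-- Taylor bound: |a k| ≤ 3/(2 k (k+1)^2)
lemma abs_a_le {k : ℕ} (hk : 1 ≤ k) : |a k| ≤ 3/(2*k*(k+1)^2) := by
  have hk' : (1 : ℝ) ≤ k := by exact_mod_cast hk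
  have hkpos : (0:ℝ) < k := by linarith
  set x : ℝ := 1/((k:ℝ)+1) with hx
  have hx0 : 0 < x := by positivity
  have hx1 : |x| < 1 := by
    rw [abs_of_pos hx0, hx]
    rw [div_lt_one (by positivity)]
    linarith
  have key := Real.abs_log_sub_add_sum_range_le hx1 2
  have hsum : ∑ i ∈ Finset.range 2, x ^ (i+1) / (i+1) = x + x^2/2 := by
    simp [Finset.sum_range_succ]
    ring
  rw [hsum] at key
  have hlog : Real.log (1 - x) = Real.log k - Real.log (k+1) := by
    have : 1 - x = (k:ℝ)/((k:ℝ)+1) := by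
      rw [hx]; field_simp; ring
    rw [this, Real.log_div (by positivity) (by positivity)]
  rw [hlog] at key
  -- key : |x + x^2/2 + (log k - log (k+1))| ≤ |x|^3 / (1 - |x|)
  have hbd : |x|^3 / (1 - |x|) = 1/((k:ℝ)*((k:ℝ)+1)^2) := by
    rw [abs_of_pos hx0, hx]
    have : (1 : ℝ) - 1/((k:ℝ)+1) = k/((k:ℝ)+1) := by field_simp; ring
    rw [this]
    field_simp
  rw [hbd] at key
  have halg : a k = (1/(2*(k:ℝ)*((k:ℝ)+1)^2)) + (x + x^2/2 + (Real.log k - Real.log (k+1))) := by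
    rw [a, hx]
    field_simp
    ring
  rw [halg]
  calc |1/(2*(k:ℝ)*((k:ℝ)+1)^2) + (x + x^2/2 + (Real.log k - Real.log (k+1)))|
      ≤ |1/(2*(k:ℝ)*((k:ℝ)+1)^2)| + |x + x^2/2 + (Real.log k - Real.log (k+1))| := abs_add_le _ _
    _ ≤ 1/(2*(k:ℝ)*((k:ℝ)+1)^2) + 1/((k:ℝ)*((k:ℝ)+1)^2) := by
        rw [abs_of_pos (by positivity)]
        exact add_le_add le_rfl key
    _ ≤ 3/(2*(k:ℝ)*((k:ℝ)+1)^2) := by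
        rw [div_add_div _ _ (by positivity) (by positivity)]
        rw [div_le_div_iff₀ (by positivity) (by positivity)]
        ring_nf
        nlinarith [sq_nonneg ((k:ℝ)+1)]

lemma abs_a_le' {k : ℕ} (hk : 1 ≤ k) :
    |a k| ≤ (3/4) * (1/(k:ℝ)^2 - 1/((k:ℝ)+1)^2) := by
  have hk' : (1 : ℝ) ≤ k := by exact_mod_cast hk
  refine (abs_a_le hk).trans ?_
  have h1 : (0:ℝ) < k := by linarith
  have : (1/(k:ℝ)^2 - 1/((k:ℝ)+1)^2) = (2*k+1)/((k:ℝ)^2*((k:ℝ)+1)^2) := by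
    field_simp; ring
  rw [this]
  have e2 : (3/4:ℝ) * ((2*(k:ℝ)+1)/((k:ℝ)^2*((k:ℝ)+1)^2)) = (3*(2*(k:ℝ)+1))/(4*((k:ℝ)^2*((k:ℝ)+1)^2)) := by
    field_simp
  rw [e2, div_le_div_iff₀ (by positivity) (by positivity)]
  nlinarith [sq_nonneg ((k:ℝ)*((k:ℝ)+1))]





noncomputable def ψ (N : ℕ) : ℝ := Hn N - Real.log N - 1/(2*N)





lemma psi_telescope {M : ℕ} (hM : 1 ≤ M) :
    ∀ N, M ≤ N → ψ N = ψ M + ∑ k ∈ Finset.Ico M N, a k := by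
  intro N
  induction N with
  | zero => intro h; omega
  | succ n ih =>
      intro h
      rcases Nat.lt_or_ge n M with h1 | h1
      · have : M = n + 1 := by omega
        subst this; simp
      · rw [Finset.sum_Ico_succ_top h1, ← add_assoc, ← ih h1]
        have hn : (1:ℝ) ≤ n := by exact_mod_cast le_trans hM h1
        have hn0 : (0:ℝ) < n := by linarith
        rw [ψ, ψ, Hn_succ, a]
        push_cast
        have h2 : ((n:ℝ)+1) ≠ 0 := by positivity
        field_simp
        ring

lemma sum_abs_a_le {M : ℕ} (hM : 1 ≤ M) (N : ℕ) (h : M ≤ N) :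
    |∑ k ∈ Finset.Ico M N, a k| ≤ 3/(4*(M:ℝ)^2) := by
  have hM' : (1:ℝ) ≤ M := by exact_mod_cast hM
  calc |∑ k ∈ Finset.Ico M N, a k| ≤ ∑ k ∈ Finset.Ico M N, |a k| :=
        Finset.abs_sum_le_sum_abs _ _
    _ ≤ ∑ k ∈ Finset.Ico M N, (3/4) * (1/(k:ℝ)^2 - 1/((k:ℝ)+1)^2) := by
        refine Finset.sum_le_sum fun k hk => abs_a_le' ?_
        exact le_trans hM (Finset.mem_Ico.mp hk).1
    _ = (3/4) * (1/(M:ℝ)^2 - 1/(N:ℝ)^2) := by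
        rw [← Finset.mul_sum]
        congr 1
        have : ∀ k:ℕ, (1/(k:ℝ)^2 - 1/((k:ℝ)+1)^2) = (fun j:ℕ => 1/(j:ℝ)^2) k - (fun j:ℕ => 1/(j:ℝ)^2) (k+1) := by
          intro k; push_cast; ring
        simp_rw [this]
        rw [Finset.sum_Ico_eq_sub _ h, Finset.sum_range_sub' (fun j:ℕ => 1/(j:ℝ)^2),
          Finset.sum_range_sub' (fun j:ℕ => 1/(j:ℝ)^2)]
        ring
    _ ≤ 3/(4*(M:ℝ)^2) := by
        have h0 : (0:ℝ) ≤ 1/(N:ℝ)^2 := by positivity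
        have h1 : (3/4:ℝ) * (1/(M:ℝ)^2 - 1/(N:ℝ)^2) ≤ (3/4) * (1/(M:ℝ)^2) := by nlinarith
        refine h1.trans (le_of_eq ?_)
        rw [div_mul_div_comm]
        norm_num

lemma tendsto_psi : Tendsto ψ atTop (𝓝 Real.eulerMascheroniConstant) := by
  have h1 : Tendsto (fun N : ℕ => Hn N - Real.log N) atTop (𝓝 Real.eulerMascheroniConstant) := by
    apply Real.tendsto_harmonic_sub_log.congr
    intro n; rw [Hn_eq_harmonic]
  have h2 : Tendsto (fun N : ℕ => 1/(2*(N:ℝ))) atTop (𝓝 0) := by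
    have h3 : Tendsto (fun N:ℕ => 2*(N:ℝ)) atTop atTop :=
      (tendsto_natCast_atTop_atTop).const_mul_atTop two_pos
    have := h3.inv_tendsto_atTop
    simp only [one_div]
    exact this.congr fun n => rfl
  have h4 := h1.sub h2
  rw [sub_zero] at h4
  exact h4

lemma gamma_sub_psi_bound {M : ℕ} (hM : 1 ≤ M) :
    |Real.eulerMascheroniConstant - ψ M| ≤ 3/(4*(M:ℝ)^2) := by
  have key : Tendsto (fun N : ℕ => ∑ k ∈ Finset.Ico M N, a k) atTop
      (𝓝 (Real.eulerMascheroniConstant - ψ M)) := by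
    have : Tendsto (fun N : ℕ => ψ N - ψ M) atTop (𝓝 (Real.eulerMascheroniConstant - ψ M)) :=
      tendsto_psi.sub tendsto_const_nhds
    apply this.congr'
    filter_upwards [eventually_ge_atTop M] with N hN
    rw [psi_telescope hM N hN]; ring
  have habs : Tendsto (fun N : ℕ => |∑ k ∈ Finset.Ico M N, a k|) atTop
      (𝓝 (|Real.eulerMascheroniConstant - ψ M|)) := key.abs
  exact le_of_tendsto habs ((eventually_ge_atTop M).mono fun N hN => sum_abs_a_le hM N hN)

lemma R1_int_eq {M : ℕ} (hM : 1 ≤ M) :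
    R1 (M:ℝ) = Real.eulerMascheroniConstant - ψ M := by
  have hM' : (1:ℝ) ≤ M := by exact_mod_cast hM
  have hM0 : (0:ℝ) < M := by linarith
  rw [R1_formula (m := M) hM0 le_rfl (by linarith), ψ]
  field_simp
  ring

lemma R1_int_bound {M : ℕ} (hM : 1 ≤ M) : |R1 M| ≤ 3/(4*(M:ℝ)^2) := by
  rw [R1_int_eq hM]
  exact gamma_sub_psi_bound hM


lemma R1_near {m : ℕ} (hm : 1 ≤ m) {t : ℝ} (h1 : (m:ℝ) ≤ t) (h2 : t ≤ (m:ℝ)+1) :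
    |R1 t - R1 ((m:ℝ)+1)| ≤ 1/(2*m*((m:ℝ)+1)) := by
  have hm' : (1:ℝ) ≤ m := by exact_mod_cast hm
  have ht0 : (0:ℝ) < t := by linarith
  obtain ⟨v, hv⟩ : ∃ v : ℝ, v = (m:ℝ)+1 := ⟨_, rfl⟩
  rw [← hv] at h2 ⊢
  have hv0 : (0:ℝ) < v := by rw [hv]; positivity
  have hfv : R1 v = Real.log v + eulerMascheroniConstant - Hn m - 1 + (m + 1/2) / v := by
    exact R1_formula hv0 (by rw [hv]; linarith) (le_of_eq hv)
  rw [R1_formula ht0 h1 (hv ▸ h2), hfv]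
  have hA1 : Real.log v - Real.log t ≤ (v - t)/t := by
    have := Real.log_le_sub_one_of_pos (show (0:ℝ) < v/t by positivity)
    rw [Real.log_div (by positivity) (by positivity)] at this
    have e : v/t - 1 = (v-t)/t := by field_simp
    linarith [e ▸ this]
  have hA2 : (v - t)/v ≤ Real.log v - Real.log t := by
    have := Real.log_le_sub_one_of_pos (show (0:ℝ) < t/v by positivity)
    rw [Real.log_div (by positivity) (by positivity)] at this
    have e : t/v - 1 = -((v-t)/v) := by field_simp; ring
    linarith [e ▸ this]
  have hexpr : Real.log t + eulerMascheroniConstant - Hn m - 1 + ((m:ℝ) + 1/2) / t -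
      (Real.log v + eulerMascheroniConstant - Hn m - 1 + ((m:ℝ) + 1/2) / v)
      = ((m:ℝ)+1/2)*(v-t)/(t*v) - (Real.log v - Real.log t) := by
    field_simp
    ring
  rw [hexpr]
  rw [abs_le]
  have hP : (0:ℝ) < t*v := by positivity
  have hPm : (m:ℝ)*((m:ℝ)+1) ≤ t*v := by rw [hv]; nlinarith
  have hd0 : 0 ≤ v - t := by linarith
  have hd1 : v - t ≤ 1 := by rw [hv]; linarith
  have hX : ((m:ℝ)+1/2)*(v-t)/(t*v) - (v-t)/t = -((v-t)/(2*(t*v))) := by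
    rw [hv]; field_simp; ring
  have hY : ((m:ℝ)+1/2)*(v-t)/(t*v) - (v-t)/v = (v-t)*(((m:ℝ)+1/2)-t)/(t*v) := by
    field_simp
  constructor
  · have e4 : (v-t)/(2*(t*v)) ≤ 1/(2*(m:ℝ)*v) := by
      rw [div_le_div_iff₀ (by positivity) (by positivity)]
      nlinarith [mul_le_mul_of_nonneg_right hd1 (show (0:ℝ) ≤ 2*(m:ℝ)*v by positivity),
        mul_le_mul_of_nonneg_right h1 (show (0:ℝ) ≤ 2*v by positivity)]
    linarith
  · have key : (v-t)*(((m:ℝ)+1/2)-t) ≤ 1/2 := by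
      rw [hv]
      rw [hv] at hd0 hd1
      nlinarith [mul_nonneg (sub_nonneg.mpr hd1) (show (0:ℝ) ≤ ((m:ℝ)+1-t)+1/2 by linarith)]
    have e6 : (v-t)*(((m:ℝ)+1/2)-t)/(t*v) ≤ 1/(2*(m:ℝ)*v) := by
      rw [div_le_div_iff₀ (by positivity) (by positivity)]
      nlinarith [mul_le_mul_of_nonneg_right key (show (0:ℝ) ≤ 2*(m:ℝ)*v by positivity)]
    linarith


lemma Hn_zero : Hn 0 = 0 := by simp [Hn]

lemma R1_bound {u : ℝ} (hu : 0 < u) : |R1 u| ≤ 5/u^2 := by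
  rcases le_or_gt u 1 with hu1 | hu1
  · have hform : R1 u = Real.log u + eulerMascheroniConstant - 1 + (1/2)/u := by
      have := R1_formula (m := 0) hu (by simpa using hu.le) (by simpa using hu1)
      rw [this, Hn_zero]
      norm_num
    rw [hform]
    have hx0 : (0:ℝ) ≤ 1/u^2 := by positivity
    have e1 : (1:ℝ)/u ≤ 1/u^2 := by
      rw [div_le_div_iff₀ hu (by positivity)]
      nlinarith
    have hlog1 : Real.log u ≤ u - 1 := Real.log_le_sub_one_of_pos hu
    have hlog2 : 1 - 1/u ≤ Real.log u := by
      have h := Real.log_le_sub_one_of_pos (show (0:ℝ) < 1/u by positivity)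
      rw [Real.log_div one_ne_zero hu.ne', Real.log_one] at h
      linarith
    have hγ1 : (1:ℝ)/2 < eulerMascheroniConstant := Real.one_half_lt_eulerMascheroniConstant
    have hγ2 : eulerMascheroniConstant < 2/3 := Real.eulerMascheroniConstant_lt_two_thirds
    rw [abs_le]
    have e5 : (5:ℝ)/u^2 = 5*(1/u^2) := by ring
    have e6 : (1/2:ℝ)/u = (1/2)*(1/u) := by ring
    rw [e5, e6]
    constructor
    · linarith
    · linarith
  · set m : ℕ := ⌊u⌋₊ with hm
    have hm1 : 1 ≤ m := Nat.le_floor (by exact_mod_cast hu1.le)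
    have hm1' : (1:ℝ) ≤ m := by exact_mod_cast hm1
    have h1 : (m:ℝ) ≤ u := Nat.floor_le hu.le
    have h2 : u ≤ (m:ℝ)+1 := (Nat.lt_floor_add_one u).le
    have hnear := R1_near hm1 h1 h2
    have hint : |R1 ((m:ℝ)+1)| ≤ 3/(4*((m:ℝ)+1)^2) := by
      have := R1_int_bound (M := m+1) (Nat.le_add_left 1 m)
      push_cast at this
      exact this
    have htri : |R1 u| ≤ |R1 u - R1 ((m:ℝ)+1)| + |R1 ((m:ℝ)+1)| := by
      calc |R1 u| = |(R1 u - R1 ((m:ℝ)+1)) + R1 ((m:ℝ)+1)| := by ring_nf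
        _ ≤ _ := abs_add_le _ _
    have f1 : 1/((m:ℝ)+1)^2 ≤ 1/u^2 :=
      one_div_le_one_div_of_le (by positivity) (by nlinarith)
    have f2 : 1/(2*(m:ℝ)*((m:ℝ)+1)) ≤ 1/((m:ℝ)+1)^2 :=
      one_div_le_one_div_of_le (by positivity) (by nlinarith)
    have f3 : (3:ℝ)/(4*((m:ℝ)+1)^2) = (3/4)*(1/((m:ℝ)+1)^2) := by
      rw [div_mul_div_comm]
      norm_num
    have f4 : (5:ℝ)/u^2 = 5*(1/u^2) := by ring
    rw [f4]
    rw [f3] at hint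
    have hx0 : (0:ℝ) ≤ 1/u^2 := by positivity
    linarith


lemma H_measurable : Measurable H := by
  have h1 : Measurable (fun n : ℕ => ∑ k ∈ Finset.Icc 1 n, (1:ℝ)/k) := measurable_from_nat
  exact h1.comp Nat.measurable_floor

lemma R1_measurable : Measurable R1 := by
  have : R1 = fun x => Real.log x + Real.eulerMascheroniConstant - H x
      - (Int.fract x - 1/2) * x⁻¹ := by
    funext x; rw [R1, div_eq_mul_inv]
  rw [this]
  exact ((Real.measurable_log.add_const _).sub H_measurable).sub
    ((measurable_fract.sub_const _).mul measurable_inv)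

lemma inv_sq_integrableOn {c : ℝ} (hc : 0 < c) :
    IntegrableOn (fun t : ℝ => 1/t^2) (Set.Ioi c) := by
  have h := integrableOn_Ioi_rpow_of_lt (show (-2:ℝ) < -1 by norm_num) hc
  apply h.congr_fun ?_ measurableSet_Ioi
  intro t ht
  rw [Set.mem_Ioi] at ht
  have ht0 : 0 < t := hc.trans ht
  show t ^ (-2:ℝ) = 1/t^2
  rw [Real.rpow_neg ht0.le, Real.rpow_two, one_div]

lemma R1_integrableOn {c : ℝ} (hc : 0 < c) : IntegrableOn R1 (Set.Ioi c) := by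
  apply Integrable.mono ((inv_sq_integrableOn hc).smul (5:ℝ))
  · exact (R1_measurable.aestronglyMeasurable).restrict
  · rw [ae_restrict_iff' measurableSet_Ioi]
    refine Eventually.of_forall fun t ht => ?_
    rw [Set.mem_Ioi] at ht
    have ht0 : 0 < t := hc.trans ht
    have := R1_bound ht0
    rw [Real.norm_eq_abs, Real.norm_eq_abs]
    refine this.trans ?_
    simp only [Pi.smul_apply, smul_eq_mul]
    rw [abs_of_nonneg (by positivity), mul_one_div]



noncomputable def Ln (m : ℕ) : ℝ := ∑ n ∈ Finset.Icc 1 m, Real.log n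
noncomputable def Φ (m : ℕ) (t : ℝ) : ℝ :=
  t * Real.log t + (Real.eulerMascheroniConstant - Hn m - 2) * t + ((m:ℝ) + 1/2) * Real.log t

lemma Ln_succ (m : ℕ) : Ln (m + 1) = Ln m + Real.log (m + 1) := by
  rw [Ln, Ln, Finset.sum_Icc_succ_top (Nat.le_add_left 1 m)]
  push_cast; ring

lemma hasDerivAt_Phi (m : ℕ) {t : ℝ} (ht : 0 < t) :
    HasDerivAt (Φ m)
      (Real.log t + eulerMascheroniConstant - Hn m - 1 + ((m:ℝ) + 1/2) / t) t := by
  have h1 : HasDerivAt (fun u : ℝ => u * Real.log u) (Real.log t + 1) t :=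
    Real.hasDerivAt_mul_log ht.ne'
  have h2 : HasDerivAt (fun u : ℝ => (Real.eulerMascheroniConstant - Hn m - 2) * u)
      (Real.eulerMascheroniConstant - Hn m - 2) t := by
    simpa using (hasDerivAt_id t).const_mul (Real.eulerMascheroniConstant - Hn m - 2)
  have h3 : HasDerivAt (fun u : ℝ => ((m:ℝ) + 1/2) * Real.log u) (((m:ℝ) + 1/2) * t⁻¹) t :=
    (Real.hasDerivAt_log ht.ne').const_mul _
  have := (h1.add h2).add h3
  refine this.congr_deriv ?_
  ring

lemma integral_piece (m : ℕ) {x y : ℝ} (hx : 0 < x) (h1 : (m:ℝ) ≤ x) (hxy : x ≤ y)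
    (h2 : y ≤ (m:ℝ)+1) :
    ∫ t in x..y, R1 t = Φ m y - Φ m x := by
  have huIcc : Set.uIcc x y = Set.Icc x y := Set.uIcc_of_le hxy
  have hmem : ∀ t ∈ Set.uIcc x y, 0 < t := by
    intro t htm
    rw [huIcc, Set.mem_Icc] at htm
    linarith [htm.1]
  rw [intervalIntegral.integral_congr
    (g := fun t => Real.log t + eulerMascheroniConstant - Hn m - 1 + ((m:ℝ) + 1/2) / t)
    (fun t htm => by
      rw [huIcc, Set.mem_Icc] at htm
      exact R1_formula (by linarith [htm.1]) (by linarith [htm.1]) (by linarith [htm.2]))]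
  apply intervalIntegral.integral_eq_sub_of_hasDerivAt
  · exact fun t htm => hasDerivAt_Phi m (hmem t htm)
  · apply ContinuousOn.intervalIntegrable
    have hne : ∀ t ∈ Set.uIcc x y, t ≠ 0 := fun t htm => (hmem t htm).ne'
    apply ContinuousOn.add
    · apply ContinuousOn.sub
      · apply ContinuousOn.sub
        · exact ((Real.continuousOn_log.mono (fun t htm => hne t htm)).add continuousOn_const)
        · exact continuousOn_const
      · exact continuousOn_const
    · exact continuousOn_const.div continuousOn_id hne

lemma V_eq (m : ℕ) {t : ℝ} (ht : 0 < t) (h1 : (m:ℝ) ≤ t) (h2 : t ≤ (m:ℝ)+1) :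
    V t = Ln m - (m:ℝ) - ((1/2) * Real.log (2*Real.pi) + 1/2) - Φ m t := by
  rcases lt_or_eq_of_le h2 with h2 | h2
  · have hfl : ⌊t⌋₊ = m := floor_eq_of_Ico h1 h2
    have hH : H t = Hn m := by rw [H, hfl]; rfl
    have hL : (∑ n ∈ Finset.Icc 1 ⌊t⌋₊, Real.log n) = Ln m := by rw [hfl]; rfl
    rw [V, hH, hL, hfl, Φ]
    ring
  · subst h2
    have hm1 : ((m:ℝ) + 1) = ((m + 1 : ℕ) : ℝ) := by push_cast; ring
    have hfl : ⌊(m:ℝ)+1⌋₊ = m + 1 := by rw [hm1, Nat.floor_natCast]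
    have hH : H ((m:ℝ)+1) = Hn (m+1) := by rw [H, hfl]; rfl
    have hL : (∑ n ∈ Finset.Icc 1 ⌊(m:ℝ)+1⌋₊, Real.log n) = Ln (m+1) := by rw [hfl]; rfl
    rw [V, hH, hL, hfl, Hn_succ, Ln_succ, Φ]
    have h0 : ((m:ℝ) + 1) ≠ 0 := by positivity
    push_cast
    field_simp
    ring

lemma intervalIntegrable_R1 {x a b : ℝ} (hx : 0 < x) (hxa : x ≤ a) (hab : a ≤ b) :
    IntervalIntegrable R1 volume a b := by
  rw [intervalIntegrable_iff_integrableOn_Ioc_of_le hab]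
  exact (R1_integrableOn hx).mono_set (fun t ht => lt_of_le_of_lt hxa ht.1)

lemma integral_eq_V {x : ℝ} (hx : 0 < x) :
    ∀ N : ℕ, ⌊x⌋₊ + 1 ≤ N → ∫ t in x..(N:ℝ), R1 t = V x - V N := by
  have hm0 : (⌊x⌋₊ : ℝ) ≤ x := Nat.floor_le hx.le
  have hm1 : x ≤ (⌊x⌋₊ : ℝ) + 1 := (Nat.lt_floor_add_one x).le
  intro N
  induction N with
  | zero => intro h; omega
  | succ n ih =>
      intro h
      rcases Nat.lt_or_ge n (⌊x⌋₊ + 1) with h1 | h1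
      · -- base : n + 1 = ⌊x⌋₊ + 1
        have hn : n + 1 = ⌊x⌋₊ + 1 := by omega
        rw [hn]
        have hcast : ((⌊x⌋₊ + 1 : ℕ) : ℝ) = (⌊x⌋₊ : ℝ) + 1 := by push_cast; ring
        rw [hcast]
        rw [integral_piece ⌊x⌋₊ hx hm0 hm1 le_rfl]
        rw [V_eq ⌊x⌋₊ hx hm0 hm1,
          V_eq ⌊x⌋₊ (by positivity) (by linarith) le_rfl]
        ring
      · -- step
        have hxn : x ≤ (n:ℝ) := by
          have : (⌊x⌋₊:ℝ) + 1 ≤ (n:ℝ) := by exact_mod_cast h1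
          linarith
        have hn0 : (0:ℝ) < n := lt_of_lt_of_le hx hxn
        have hcast : ((n + 1 : ℕ) : ℝ) = (n : ℝ) + 1 := by push_cast; ring
        rw [hcast]
        rw [← intervalIntegral.integral_add_adjacent_intervals
          (intervalIntegrable_R1 hx le_rfl hxn)
          (intervalIntegrable_R1 hx hxn (by linarith) : IntervalIntegrable R1 volume _ ((n:ℝ)+1))]
        rw [ih h1]
        rw [integral_piece n hn0 le_rfl (by linarith) le_rfl]
        rw [V_eq n hn0 le_rfl (by linarith),
          V_eq n (by positivity) (by linarith) le_rfl]
        have : ((n:ℝ) + 1) = ((n + 1 : ℕ) : ℝ) := by push_cast; ring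
        rw [this]
        ring

lemma Ln_eq_log_factorial (N : ℕ) : Ln N = Real.log (Nat.factorial N : ℝ) := by
  induction N with
  | zero => simp [Ln]
  | succ n ih =>
      rw [Ln_succ, ih, Nat.factorial_succ]
      push_cast
      rw [Real.log_mul (by positivity) (by exact_mod_cast Nat.factorial_pos n |>.ne')]
      ring

lemma V_at_nat {N : ℕ} (hN : 1 ≤ N) :
    V N = Real.log (Stirling.stirlingSeq N) - (1/2) * Real.log Real.pi - (N:ℝ) * R1 N := by
  have hN' : (1:ℝ) ≤ N := by exact_mod_cast hN
  have hN0 : (0:ℝ) < N := by linarith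
  have hfl : ⌊(N:ℝ)⌋₊ = N := Nat.floor_natCast N
  have hH : H (N:ℝ) = Hn N := by rw [H, hfl]; rfl
  have hL : (∑ n ∈ Finset.Icc 1 ⌊(N:ℝ)⌋₊, Real.log n) = Ln N := by rw [hfl]; rfl
  have hR : R1 (N:ℝ) = Real.log N + eulerMascheroniConstant - Hn N + 1/(2*N) := by
    rw [R1_formula hN0 le_rfl (by linarith)]
    field_simp
    ring
  have hst : Real.log (Stirling.stirlingSeq N)
      = Real.log (Nat.factorial N : ℝ) - 1/2 * (Real.log 2 + Real.log N) - (N:ℝ) * (Real.log N - 1) := by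
    rw [Stirling.log_stirlingSeq_formula]
    rw [Real.log_mul (by norm_num) hN0.ne', Real.log_div hN0.ne' (Real.exp_ne_zero 1),
      Real.log_exp]
  have h2pi : Real.log (2 * Real.pi) = Real.log 2 + Real.log Real.pi :=
    Real.log_mul (by norm_num) Real.pi_ne_zero
  rw [V, hH, hL, hfl, hR, hst, Ln_eq_log_factorial, h2pi]
  field_simp
  ring

lemma V_tendsto : Tendsto (fun N : ℕ => V N) atTop (𝓝 0) := by
  have hsq : Real.sqrt Real.pi ≠ 0 := by positivity
  have h1 : Tendsto (fun N : ℕ => Real.log (Stirling.stirlingSeq N)) atTop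
      (𝓝 ((1/2) * Real.log Real.pi)) := by
    have := (Real.continuousAt_log hsq).tendsto.comp Stirling.tendsto_stirlingSeq_sqrt_pi
    rwa [Real.log_sqrt Real.pi_pos.le, ← one_div_mul_eq_div] at this
  have h2 : Tendsto (fun N : ℕ => (N:ℝ) * R1 N) atTop (𝓝 0) := by
    have hb : Tendsto (fun N:ℕ => 3/(4*(N:ℝ))) atTop (𝓝 0) := by
      have h3 : Tendsto (fun N:ℕ => 4*(N:ℝ)) atTop atTop :=
        (tendsto_natCast_atTop_atTop).const_mul_atTop (by norm_num)
      have h4 := h3.inv_tendsto_atTop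
      have he : (fun N:ℕ => 3/(4*(N:ℝ))) = (fun N:ℕ => 3 * (4*(N:ℝ))⁻¹) := by
        funext N; rw [div_eq_mul_inv]
      rw [he]
      simpa using h4.const_mul (3:ℝ)
    refine squeeze_zero_norm (fun N => ?_) hb
    rcases Nat.eq_zero_or_pos N with h | h
    · subst h; simp
    · have hN0 : (0:ℝ) < N := by exact_mod_cast h
      rw [Real.norm_eq_abs, abs_mul, abs_of_nonneg hN0.le]
      calc (N:ℝ) * |R1 N| ≤ (N:ℝ) * (3/(4*(N:ℝ)^2)) :=
            mul_le_mul_of_nonneg_left (R1_int_bound h) hN0.le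
        _ = 3/(4*(N:ℝ)) := by field_simp
  have key : Tendsto (fun N : ℕ =>
      Real.log (Stirling.stirlingSeq N) - (1/2) * Real.log Real.pi - (N:ℝ) * R1 N)
      atTop (𝓝 0) := by
    have := (h1.sub (tendsto_const_nhds :
      Tendsto (fun _ : ℕ => (1/2) * Real.log Real.pi) atTop (𝓝 ((1/2) * Real.log Real.pi)))).sub h2
    simpa using this
  apply key.congr'
  filter_upwards [eventually_ge_atTop 1] with N hN
  rw [V_at_nat hN]

lemma part1 {x : ℝ} (hx : 0 < x) : V x = ∫ t in Set.Ioi x, R1 t := by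
  have h1 : Tendsto (fun N : ℕ => ∫ t in x..(N:ℝ), R1 t) atTop
      (𝓝 (∫ t in Set.Ioi x, R1 t)) :=
    intervalIntegral_tendsto_integral_Ioi x (R1_integrableOn hx) tendsto_natCast_atTop_atTop
  have h2 : Tendsto (fun N : ℕ => ∫ t in x..(N:ℝ), R1 t) atTop (𝓝 (V x)) := by
    have h3 : Tendsto (fun N : ℕ => V x - V N) atTop (𝓝 (V x)) := by
      have := (tendsto_const_nhds : Tendsto (fun _ : ℕ => V x) atTop (𝓝 (V x))).sub V_tendsto
      simpa using this
    apply h3.congr'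
    filter_upwards [eventually_ge_atTop (⌊x⌋₊ + 1)] with N hN
    rw [integral_eq_V hx N hN]
  exact tendsto_nhds_unique h2 h1

lemma part2 {r : ℝ} (hr : 0 < r) :
    (∫ t in Set.Ioi r, S1 t) = ∑' n : ℕ, V ((n + 1) * r) / (n + 1) := by
  set C : ℝ := ∫ t in Set.Ioi r, 1/t^2 with hC
  have hC0 : 0 ≤ C := setIntegral_nonneg measurableSet_Ioi (fun t _ => by positivity)
  have hk1 : ∀ k : ℕ, (0:ℝ) < (k:ℝ) + 1 := fun k => by positivity
  have hfb : ∀ (k : ℕ) (t : ℝ), t ∈ Set.Ioi r → ‖R1 (((k:ℝ)+1) * t)‖ ≤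
      (5/((k:ℝ)+1)^2) * (1/t^2) := by
    intro k t ht
    rw [Set.mem_Ioi] at ht
    have ht0 : 0 < t := hr.trans ht
    rw [Real.norm_eq_abs]
    refine (R1_bound (by positivity)).trans (le_of_eq ?_)
    rw [mul_pow]
    rw [div_mul_eq_mul_div, mul_one_div, div_div, mul_comm (t^2)]
  have hmeas : ∀ k : ℕ, AEStronglyMeasurable (fun t => R1 (((k:ℝ)+1) * t))
      (volume.restrict (Set.Ioi r)) :=
    fun k => ((R1_measurable.comp (measurable_const_mul _)).aestronglyMeasurable).restrict
  have hint : ∀ k : ℕ, IntegrableOn (fun t => R1 (((k:ℝ)+1) * t)) (Set.Ioi r) := by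
    intro k
    apply Integrable.mono ((inv_sq_integrableOn hr).const_mul (5/((k:ℝ)+1)^2))
    · exact hmeas k
    · rw [ae_restrict_iff' measurableSet_Ioi]
      refine Eventually.of_forall fun t ht => ?_
      refine (hfb k t ht).trans (le_of_eq ?_)
      rw [Real.norm_eq_abs, abs_of_nonneg]
      have ht0 : 0 < t := hr.trans ht
      positivity
  have hnorm : ∀ k : ℕ, ∫ t in Set.Ioi r, ‖R1 (((k:ℝ)+1) * t)‖ ≤ (5/((k:ℝ)+1)^2) * C := by
    intro k
    rw [hC, ← integral_const_mul]
    apply setIntegral_mono_on ((hint k).norm) ((inv_sq_integrableOn hr).const_mul _)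
      measurableSet_Ioi
    exact fun t ht => hfb k t ht
  have hB : Summable (fun k : ℕ => (5/((k:ℝ)+1)^2) * C) := by
    have h1 : Summable (fun k : ℕ => 1/((k:ℝ)+1)^2) := by
      have h2 : Summable (fun n : ℕ => 1/(n:ℝ)^2) := by
        rw [Real.summable_one_div_nat_pow]
        norm_num
      have := (summable_nat_add_iff 1).mpr h2
      apply this.congr
      intro k
      push_cast
      ring
    have := h1.mul_left (5 * C)
    apply this.congr
    intro k
    ring
  have hne : (∑' k : ℕ, ∫⁻ t in Set.Ioi r, ‖R1 (((k:ℝ)+1) * t)‖ₑ) ≠ ⊤ := by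
    have hle : (∑' k : ℕ, ∫⁻ t in Set.Ioi r, ‖R1 (((k:ℝ)+1) * t)‖ₑ)
        ≤ ∑' k : ℕ, ENNReal.ofReal ((5/((k:ℝ)+1)^2) * C) := by
      apply ENNReal.tsum_le_tsum
      intro k
      rw [← ofReal_integral_norm_eq_lintegral_enorm (hint k)]
      exact ENNReal.ofReal_le_ofReal (hnorm k)
    rw [← ENNReal.ofReal_tsum_of_nonneg (fun k => by positivity) hB] at hle
    exact ne_top_of_le_ne_top ENNReal.ofReal_ne_top hle
  have hkey := integral_tsum (f := fun (k : ℕ) (t : ℝ) => R1 (((k:ℝ)+1) * t))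
    (μ := volume.restrict (Set.Ioi r)) hmeas hne
  rw [show (∫ t in Set.Ioi r, S1 t) = ∫ t in Set.Ioi r, ∑' k : ℕ, R1 (((k:ℝ)+1) * t) from rfl]
  rw [hkey]
  apply tsum_congr
  intro k
  rw [MeasureTheory.integral_comp_mul_left_Ioi R1 r (hk1 k)]
  rw [smul_eq_mul, ← part1 (by positivity)]
  rw [inv_mul_eq_div]

end VProofAux

/-- `V(x) = ∫_x^∞ R₁(t) dt` for every `x > 0`, and
`∫_r^∞ S₁(t) dt = ∑_{n≥1} V(nr)/n`. -/
theorem V_eq_integral_R1_and_integral_S1_eq_sum_V :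
    (∀ x : ℝ, 0 < x → V x = ∫ t in Set.Ioi x, R1 t) ∧
    (∀ r : ℝ, 0 < r →
      (∫ t in Set.Ioi r, S1 t) = ∑' n : ℕ, V ((n + 1) * r) / (n + 1)) :=
  ⟨fun _ hx => VProofAux.part1 hx, fun _ hr => VProofAux.part2 hr⟩
end

section
/- S₁(1) = (log(2π) − γ − 1)/2. -/
open Real MeasureTheory Filter Topology

namespace S1Aux

lemma tele (g : ℕ → ℝ) {N M : ℕ} (h : N ≤ M) :
    ∑ k ∈ Finset.Ico N M, (g k - g (k + 1)) = g N - g M := by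
  rw [Finset.sum_Ico_eq_sub _ h, Finset.sum_range_sub' g, Finset.sum_range_sub' g]; ring

lemma pointwise {k : ℕ} (hk : 2 ≤ k) :
    |(Real.log (k + 1) - Real.log k - 1 / (k + 1)) - (1 / (2 * k) - 1 / (2 * (k + 1)))| ≤
      3 / (4 * ((k : ℝ) - 1) * k) - 3 / (4 * (k : ℝ) * (k + 1)) := by
  have hr : (2 : ℝ) ≤ k := by exact_mod_cast hk
  set r : ℝ := (k : ℝ) with hrdef
  have hr0 : 0 < r := by linarith
  have hx1 : |1 / (r + 1)| < 1 := by
    rw [abs_of_pos (by positivity)]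
    rw [div_lt_one (by linarith)]; linarith
  have key := Real.abs_log_sub_add_sum_range_le hx1 2
  have h1mx : 1 - 1 / (r + 1) = r / (r + 1) := by field_simp; ring
  have hlog : Real.log (1 - 1 / (r + 1)) = Real.log r - Real.log (r + 1) := by
    rw [h1mx, Real.log_div hr0.ne' (by linarith)]
  rw [hlog] at key
  have hsum : ∑ i ∈ Finset.range 2, (1 / (r + 1)) ^ (i + 1) / (i + 1)
      = 1 / (r + 1) + (1 / (r + 1)) ^ 2 / 2 := by
    simp [Finset.sum_range_succ]; ring
  have hxabs : |1 / (r + 1)| = 1 / (r + 1) := abs_of_pos (by positivity)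
  rw [hsum, hxabs] at key
  have hb : (1 / (r + 1)) ^ 3 / (1 - 1 / (r + 1)) = 1 / (r * (r + 1) ^ 2) := by
    rw [h1mx]; field_simp
  rw [hb] at key
  have habs2 : |(1 / (r + 1)) ^ 2 / 2 - (1 / (2 * r) - 1 / (2 * (r + 1)))|
      = 1 / (2 * r * (r + 1) ^ 2) := by
    have : (1 / (r + 1)) ^ 2 / 2 - (1 / (2 * r) - 1 / (2 * (r + 1)))
        = -(1 / (2 * r * (r + 1) ^ 2)) := by
      field_simp; ring
    rw [this, abs_neg, abs_of_pos (by positivity)]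
  have tri : |(Real.log (r + 1) - Real.log r - 1 / (r + 1)) - (1 / (2 * r) - 1 / (2 * (r + 1)))|
      ≤ 1 / (r * (r + 1) ^ 2) + 1 / (2 * r * (r + 1) ^ 2) := by
    have := abs_add_le (-(1 / (r + 1) + (1 / (r + 1)) ^ 2 / 2 + (Real.log r - Real.log (r + 1))))
      ((1 / (r + 1)) ^ 2 / 2 - (1 / (2 * r) - 1 / (2 * (r + 1))))
    rw [abs_neg] at this
    calc |(Real.log (r + 1) - Real.log r - 1 / (r + 1)) - (1 / (2 * r) - 1 / (2 * (r + 1)))|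
        = |(-(1 / (r + 1) + (1 / (r + 1)) ^ 2 / 2 + (Real.log r - Real.log (r + 1)))) +
            ((1 / (r + 1)) ^ 2 / 2 - (1 / (2 * r) - 1 / (2 * (r + 1))))| := by ring_nf
      _ ≤ _ := this
      _ ≤ _ := by rw [habs2]; exact add_le_add_left key _
  refine tri.trans ?_
  have hrm : (0:ℝ) < r - 1 := by linarith
  have e1 : 1 / (r * (r + 1) ^ 2) + 1 / (2 * r * (r + 1) ^ 2) = 3 / (2 * (r * (r + 1) ^ 2)) := by
    field_simp; ring
  have e2 : 3 / (4 * ((r:ℝ) - 1) * r) - 3 / (4 * r * (r + 1))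
      = 3 / (2 * ((r - 1) * r * (r + 1))) := by
    rw [div_sub_div _ _ (by positivity) (by positivity : (4:ℝ) * r * (r+1) ≠ 0)]
    rw [div_eq_div_iff (by positivity) (by positivity)]
    ring
  rw [e1, e2]
  apply div_le_div_of_nonneg_left (by norm_num) (by positivity)
  nlinarith

lemma key {N : ℕ} (hN : 2 ≤ N) :
    |(harmonic N : ℝ) - Real.log N - Real.eulerMascheroniConstant - 1 / (2 * N)| ≤
      1 / (((N : ℝ) - 1) * N) := by
  set γ := Real.eulerMascheroniConstant with hγ
  set b : ℕ → ℝ := fun k => (harmonic k : ℝ) - Real.log k with hbdef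
  have hNR : (2 : ℝ) ≤ N := by exact_mod_cast hN
  have hstep : ∀ k : ℕ, b k - b (k + 1) =
      Real.log ((k:ℝ) + 1) - Real.log k - 1 / ((k:ℝ) + 1) := by
    intro k
    simp only [hbdef]
    rw [harmonic_succ k]
    push_cast
    ring
  have hmain : ∀ M : ℕ, N ≤ M →
      |b N - b M - (1 / (2 * (N:ℝ)) - 1 / (2 * (M:ℝ)))| ≤ 3 / (4 * ((N : ℝ) - 1) * N) := by
    intro M hM
    have hMR : (2:ℝ) ≤ M := le_trans hNR (by exact_mod_cast hM)
    have h1 : b N - b M = ∑ k ∈ Finset.Ico N M, (b k - b (k + 1)) := (tele b hM).symm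
    have h2 : 1 / (2 * (N:ℝ)) - 1 / (2 * (M:ℝ)) =
        ∑ k ∈ Finset.Ico N M, (1 / (2 * (k:ℝ)) - 1 / (2 * ((k+1:ℕ):ℝ))) := by
      exact (tele (fun k => 1 / (2 * (k : ℝ))) hM).symm
    rw [h1, h2, ← Finset.sum_sub_distrib]
    refine (Finset.abs_sum_le_sum_abs _ _).trans ?_
    have h3 : ∑ k ∈ Finset.Ico N M,
        |b k - b (k + 1) - (1 / (2 * (k:ℝ)) - 1 / (2 * ((k+1:ℕ):ℝ)))| ≤
        ∑ k ∈ Finset.Ico N M,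
          ((fun k : ℕ => 3 / (4 * ((k : ℝ) - 1) * k)) k
            - (fun k : ℕ => 3 / (4 * ((k : ℝ) - 1) * k)) (k + 1)) := by
      refine Finset.sum_le_sum fun k hk => ?_
      have hk2 : 2 ≤ k := hN.trans (Finset.mem_Ico.mp hk).1
      rw [hstep k]
      have := pointwise hk2
      push_cast
      exact this.trans_eq (by push_cast; ring)
    refine h3.trans ?_
    rw [tele _ hM]
    have h1M : (0:ℝ) < (M:ℝ) - 1 := by linarith
    have hEM : 0 ≤ 3 / (4 * ((M : ℝ) - 1) * M) := by
      apply div_nonneg (by norm_num)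
      nlinarith
    linarith
  have hb : Tendsto b atTop (𝓝 γ) := Real.tendsto_harmonic_sub_log
  have hM0 : Tendsto (fun M : ℕ => 1 / (2 * (M:ℝ))) atTop (𝓝 0) := by
    have := tendsto_one_div_atTop_nhds_zero_nat (𝕜 := ℝ)
    have h2 := this.div_const 2
    simpa [one_div, div_div, mul_comm, div_eq_mul_inv] using h2
  have hF : Tendsto (fun M : ℕ => |b N - b M - (1 / (2 * (N:ℝ)) - 1 / (2 * (M:ℝ)))|) atTop
      (𝓝 |b N - γ - (1 / (2 * (N:ℝ)) - 0)|) := by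
    apply Tendsto.abs
    exact (tendsto_const_nhds.sub hb).sub (tendsto_const_nhds.sub hM0)
  have hle : |b N - γ - (1 / (2 * (N:ℝ)) - 0)| ≤ 3 / (4 * ((N : ℝ) - 1) * N) := by
    refine le_of_tendsto hF ?_
    filter_upwards [eventually_ge_atTop N] with M hM using hmain M hM
  rw [sub_zero] at hle
  refine le_trans (le_of_eq (by simp only [hbdef])) (hle.trans ?_)
  have h1 : (0:ℝ) < (N:ℝ) - 1 := by linarith
  rw [div_le_div_iff₀ (by positivity) (by positivity)]
  nlinarith

lemma H_nat (n : ℕ) : H (n : ℝ) = (harmonic n : ℝ) := by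
  rw [H, Nat.floor_natCast, harmonic_eq_sum_Icc]
  push_cast
  simp [one_div]

lemma R1_succ (n : ℕ) : R1 ((n : ℝ) + 1) =
    Real.log ((n : ℝ) + 1) + Real.eulerMascheroniConstant - (harmonic (n + 1) : ℝ)
      + 1 / (2 * ((n : ℝ) + 1)) := by
  have h : ((n : ℝ) + 1) = ((n + 1 : ℕ) : ℝ) := by push_cast; ring
  rw [R1, h, H_nat, Int.fract_natCast]
  have hne : ((n + 1 : ℕ) : ℝ) ≠ 0 := by positivity
  field_simp
  ring

lemma sum_formula (N : ℕ) : ∑ n ∈ Finset.range N, R1 ((n : ℝ) + 1) =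
    Real.log (Nat.factorial N : ℝ) - ((N : ℝ) + 1/2) * (harmonic N : ℝ)
      + (N : ℝ) * (1 + Real.eulerMascheroniConstant) := by
  induction N with
  | zero => simp [harmonic_zero]
  | succ N ih =>
    rw [Finset.sum_range_succ, ih, R1_succ, harmonic_succ, Nat.factorial_succ]
    rw [show (((N + 1) * Nat.factorial N : ℕ) : ℝ) = ((N : ℝ) + 1) * (Nat.factorial N : ℝ) by
      push_cast; ring, Real.log_mul (by positivity) (by positivity)]
    have hne : ((N : ℝ) + 1) ≠ 0 := by positivity
    push_cast
    field_simp
    ring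

end S1Aux

/-- `S₁(1) = (log 2π − γ − 1)/2`. -/
theorem S1_one :
    S1 1 = (Real.log (2 * Real.pi) - Real.eulerMascheroniConstant - 1) / 2 := by
  set γ := Real.eulerMascheroniConstant with hγ
  set f : ℕ → ℝ := fun n => R1 ((n : ℝ) + 1) with hf
  have hS1 : S1 1 = ∑' n, f n := by simp only [S1, mul_one, hf]
  have hfn : ∀ n : ℕ,
      f n = -((harmonic (n+1) : ℝ) - Real.log ((n+1:ℕ) : ℝ) - γ - 1/(2*((n+1:ℕ) : ℝ))) := by
    intro n
    simp only [hf]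
    rw [S1Aux.R1_succ]
    push_cast
    ring
  have hbound : ∀ n : ℕ, 1 ≤ n → ‖f n‖ ≤ 1/(n:ℝ)^2 := by
    intro n hn
    have h2 : 2 ≤ n + 1 := by omega
    have hk := S1Aux.key h2
    rw [hfn n, Real.norm_eq_abs, abs_neg]
    refine hk.trans ?_
    have hn1 : (1:ℝ) ≤ (n:ℝ) := by exact_mod_cast hn
    have he : ((n+1:ℕ):ℝ) - 1 = (n:ℝ) := by push_cast; ring
    rw [he]
    rw [div_le_div_iff₀ (by positivity) (by positivity)]
    push_cast
    nlinarith
  have hsummable : Summable f := by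
    refine Summable.of_norm_bounded_eventually (g := fun n : ℕ => 1/(n:ℝ)^2) ?_ ?_
    · exact_mod_cast Real.summable_one_div_nat_pow.mpr one_lt_two
    · rw [Nat.cofinite_eq_atTop]
      filter_upwards [eventually_ge_atTop 1] with n hn using hbound n hn
  have hT : Tendsto (fun N => ∑ n ∈ Finset.range N, f n) atTop (𝓝 (∑' n, f n)) :=
    hsummable.hasSum.tendsto_sum_nat
  -- the limit of the partial sums
  have hb : Tendsto (fun N : ℕ => (harmonic N : ℝ) - Real.log N) atTop (𝓝 γ) :=
    Real.tendsto_harmonic_sub_log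
  have hg0 : Tendsto (fun N : ℕ => 1/((N:ℝ)-1)) atTop (𝓝 0) := by
    have h1 : Tendsto (fun N : ℕ => (N:ℝ) - 1) atTop atTop := by
      have := tendsto_natCast_atTop_atTop (R := ℝ)
      exact tendsto_atTop_add_const_right atTop (-1) this
    simpa only [one_div, Function.comp_def] using tendsto_inv_atTop_zero.comp h1
  have hNb : Tendsto (fun N : ℕ => (N:ℝ) * ((harmonic N : ℝ) - Real.log N - γ)) atTop
      (𝓝 (1/2)) := by
    rw [← tendsto_sub_nhds_zero_iff]
    refine squeeze_zero_norm' ?_ hg0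
    filter_upwards [eventually_ge_atTop 2] with N hN
    have hk := S1Aux.key hN
    have hNR : (2:ℝ) ≤ (N:ℝ) := by exact_mod_cast hN
    have hN0 : (N:ℝ) ≠ 0 := by positivity
    have heq : (N:ℝ) * ((harmonic N : ℝ) - Real.log N - γ) - 1/2
        = (N:ℝ) * ((harmonic N:ℝ) - Real.log N - γ - 1/(2*(N:ℝ))) := by
      field_simp
    rw [Real.norm_eq_abs, heq, abs_mul, abs_of_nonneg (by positivity : (0:ℝ) ≤ (N:ℝ))]
    calc (N:ℝ) * |(harmonic N:ℝ) - Real.log N - γ - 1/(2*(N:ℝ))|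
        ≤ (N:ℝ) * (1 / (((N : ℝ) - 1) * N)) := by
          exact mul_le_mul_of_nonneg_left hk (by positivity)
      _ = 1/((N:ℝ)-1) := by
          rw [mul_one_div, div_eq_div_iff (by nlinarith) (by nlinarith)]
          ring
  have hstir : Tendsto (fun N : ℕ => Real.log (Stirling.stirlingSeq N)) atTop
      (𝓝 (Real.log (Real.sqrt π))) := by
    have hπ : Real.sqrt π ≠ 0 := by positivity
    exact ((Real.continuousAt_log hπ).tendsto).comp Stirling.tendsto_stirlingSeq_sqrt_pi
  have hG : Tendsto (fun N : ℕ => Real.log (Stirling.stirlingSeq N) + (1/2) * Real.log 2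
      - (N:ℝ) * ((harmonic N : ℝ) - Real.log N - γ)
      - (1/2) * ((harmonic N : ℝ) - Real.log N)) atTop
      (𝓝 (Real.log (Real.sqrt π) + (1/2) * Real.log 2 - 1/2 - (1/2) * γ)) := by
    exact (((hstir.add_const _).sub hNb).sub (hb.const_mul _))
  have hEq : ∀ᶠ N : ℕ in atTop, Real.log (Stirling.stirlingSeq N) + (1/2) * Real.log 2
      - (N:ℝ) * ((harmonic N : ℝ) - Real.log N - γ)
      - (1/2) * ((harmonic N : ℝ) - Real.log N) = ∑ n ∈ Finset.range N, f n := by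
    filter_upwards [eventually_ge_atTop 1] with N hN
    have hN0 : (0:ℝ) < (N:ℝ) := by exact_mod_cast hN
    have hfact := Stirling.log_stirlingSeq_formula N
    have hlog2N : Real.log (2 * (N:ℝ)) = Real.log 2 + Real.log N :=
      Real.log_mul two_ne_zero hN0.ne'
    have hlogNe : Real.log ((N:ℝ) / Real.exp 1) = Real.log N - 1 := by
      rw [Real.log_div hN0.ne' (Real.exp_ne_zero 1), Real.log_exp]
    have hsum : ∑ n ∈ Finset.range N, f n =
        Real.log (Nat.factorial N : ℝ) - ((N : ℝ) + 1/2) * (harmonic N : ℝ)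
          + (N : ℝ) * (1 + γ) := S1Aux.sum_formula N
    rw [hsum]
    rw [hlog2N, hlogNe] at hfact
    have hNfact : Real.log (Nat.factorial N : ℝ) = Real.log (Stirling.stirlingSeq N)
        + 1/2 * (Real.log 2 + Real.log N) + (N:ℝ) * (Real.log N - 1) := by
      rw [hfact]; push_cast; ring
    rw [hNfact]
    ring
  have hlim : Tendsto (fun N => ∑ n ∈ Finset.range N, f n) atTop
      (𝓝 (Real.log (Real.sqrt π) + (1/2) * Real.log 2 - 1/2 - (1/2) * γ)) :=
    hG.congr' hEq
  have htsum : ∑' n, f n = Real.log (Real.sqrt π) + (1/2) * Real.log 2 - 1/2 - (1/2) * γ :=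
    tendsto_nhds_unique hT hlim
  rw [hS1, htsum]
  rw [Real.log_sqrt Real.pi_pos.le, Real.log_mul two_ne_zero Real.pi_ne_zero]
  ring
end

section
/- For every real x ≥ 1, (1 − γ)·L₀(x) − M₀(x)/(2x) = L₀(x)·log x − (L₁(x) + 1) − Φ₁(x)/x + 1/x, where L₀(x) = ∑_{n≤x} μ(n)/n, L₁(x) = ∑_{n≤x} μ(n)·(log n)/n, M₀(x) = ∑_{n≤x} μ(n), and Φ₁(x) = ∑_{n≤x} μ(n)·(x/n)·R₁(x/n). -/
open Real MeasureTheory Filter Topology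

/-- Dirichlet-hyperbola style reindexing. -/
lemma swapDiv (N : ℕ) (F : ℕ → ℕ → ℝ) :
    ∑ n ∈ Finset.Icc 1 N, ∑ k ∈ Finset.Icc 1 (N / n), F n k
      = ∑ m ∈ Finset.Icc 1 N, ∑ p ∈ m.divisorsAntidiagonal, F p.1 p.2 := by
  rw [Finset.sum_sigma', Finset.sum_sigma']
  refine Finset.sum_nbij' (fun p => ⟨p.1 * p.2, (p.1, p.2)⟩)
    (fun q => ⟨q.2.1, q.2.2⟩) ?_ ?_ ?_ ?_ ?_
  · rintro ⟨n, k⟩ hp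
    simp only [Finset.mem_sigma, Finset.mem_Icc] at hp ⊢
    obtain ⟨⟨hn1, hnN⟩, hk1, hkN⟩ := hp
    have hn0 : 0 < n := hn1
    have hmul : n * k ≤ N := by
      have h := (Nat.le_div_iff_mul_le hn0).mp hkN
      rwa [Nat.mul_comm] at h
    refine ⟨⟨Nat.one_le_iff_ne_zero.2 (by positivity), hmul⟩, ?_⟩
    rw [Nat.mem_divisorsAntidiagonal]
    exact ⟨rfl, by positivity⟩
  · rintro ⟨m, d, e⟩ hq
    simp only [Finset.mem_sigma, Finset.mem_Icc, Nat.mem_divisorsAntidiagonal] at hq ⊢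
    obtain ⟨⟨hm1, hmN⟩, hde, hm0⟩ := hq
    have hd0 : 0 < d := Nat.pos_of_ne_zero (by rintro rfl; simp at hde; omega)
    have he0 : 0 < e := Nat.pos_of_ne_zero (by rintro rfl; simp at hde; omega)
    refine ⟨⟨hd0, le_trans (Nat.le_of_dvd (by omega) ⟨e, hde.symm⟩) hmN⟩, he0, ?_⟩
    rw [Nat.le_div_iff_mul_le hd0, Nat.mul_comm]
    rw [hde]; exact hmN
  · rintro ⟨n, k⟩ _; rfl
  · rintro ⟨m, d, e⟩ hq
    simp only [Finset.mem_sigma, Nat.mem_divisorsAntidiagonal] at hq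
    obtain ⟨_, hde, _⟩ := hq
    simpa using hde
  · rintro ⟨n, k⟩ _; rfl

lemma moeb_DA_sum (m : ℕ) (hm : m ≠ 0) :
    ∑ p ∈ m.divisorsAntidiagonal, (ArithmeticFunction.moebius p.1 : ℝ)
      = if m = 1 then 1 else 0 := by
  have h := congrArg (fun f : ArithmeticFunction ℝ => f m)
    (ArithmeticFunction.coe_moebius_mul_coe_zeta (R := ℝ))
  simp only [ArithmeticFunction.mul_apply, ArithmeticFunction.one_apply] at h
  rw [← h]
  refine Finset.sum_congr rfl fun p hp => ?_
  obtain ⟨h1, h2⟩ := (Nat.mem_divisorsAntidiagonal.mp hp)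
  have hp2 : p.2 ≠ 0 := by rintro h0; rw [h0, mul_zero] at h1; exact hm h1.symm
  simp [ArithmeticFunction.intCoe_apply, ArithmeticFunction.natCoe_apply,
    ArithmeticFunction.zeta_apply, hp2]

lemma lemmaA (N : ℕ) (hN : 1 ≤ N) :
    ∑ n ∈ Finset.Icc 1 N, (ArithmeticFunction.moebius n : ℝ) * ((N / n : ℕ) : ℝ) = 1 := by
  have h1 : ∀ n ∈ Finset.Icc 1 N, (ArithmeticFunction.moebius n : ℝ) * ((N / n : ℕ) : ℝ)
      = ∑ k ∈ Finset.Icc 1 (N / n), (ArithmeticFunction.moebius n : ℝ) := by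
    intro n _
    rw [Finset.sum_const, Nat.card_Icc]
    simp [mul_comm]
  rw [Finset.sum_congr rfl h1, swapDiv N (fun n _ => (ArithmeticFunction.moebius n : ℝ))]
  have h2 : ∀ m ∈ Finset.Icc 1 N,
      (∑ p ∈ m.divisorsAntidiagonal, (ArithmeticFunction.moebius p.1 : ℝ))
        = if m = 1 then 1 else 0 := by
    intro m hm
    exact moeb_DA_sum m (by simp only [Finset.mem_Icc] at hm; omega)
  rw [Finset.sum_congr rfl h2, Finset.sum_ite_eq' (Finset.Icc 1 N) 1 (fun _ => (1:ℝ))]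
  simp [hN]

lemma lemmaB (N : ℕ) (hN : 1 ≤ N) :
    ∑ n ∈ Finset.Icc 1 N, (ArithmeticFunction.moebius n : ℝ) / n
        * (∑ k ∈ Finset.Icc 1 (N / n), (1 : ℝ) / k) = 1 := by
  have h1 : ∀ n ∈ Finset.Icc 1 N, (ArithmeticFunction.moebius n : ℝ) / n
      * (∑ k ∈ Finset.Icc 1 (N / n), (1 : ℝ) / k)
      = ∑ k ∈ Finset.Icc 1 (N / n),
          (ArithmeticFunction.moebius n : ℝ) / (n * k) := by
    intro n _
    rw [Finset.mul_sum]
    refine Finset.sum_congr rfl fun k _ => ?_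
    field_simp
  rw [Finset.sum_congr rfl h1,
    swapDiv N (fun n k => (ArithmeticFunction.moebius n : ℝ) / (n * k))]
  have h2 : ∀ m ∈ Finset.Icc 1 N,
      (∑ p ∈ m.divisorsAntidiagonal, (ArithmeticFunction.moebius p.1 : ℝ) / (p.1 * p.2))
        = if m = 1 then 1 else 0 := by
    intro m hm
    simp only [Finset.mem_Icc] at hm
    have hm0 : m ≠ 0 := by omega
    have h3 : ∀ p ∈ m.divisorsAntidiagonal,
        (ArithmeticFunction.moebius p.1 : ℝ) / (p.1 * p.2)
          = (ArithmeticFunction.moebius p.1 : ℝ) * (1 / m) := by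
      intro p hp
      obtain ⟨h1', _⟩ := Nat.mem_divisorsAntidiagonal.mp hp
      rw [div_eq_mul_one_div, ← Nat.cast_mul, h1']
    rw [Finset.sum_congr rfl h3, ← Finset.sum_mul, moeb_DA_sum m hm0]
    by_cases h : m = 1 <;> simp [h]
  rw [Finset.sum_congr rfl h2, Finset.sum_ite_eq' (Finset.Icc 1 N) 1 (fun _ => (1:ℝ))]
  simp [hN]

/-- MacLeod-type identity: for `x ≥ 1`,
`(1 − γ)L₀(x) − M₀(x)/(2x) = L₀(x) log x − (L₁(x) + 1) − Φ₁(x)/x + 1/x`, where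
`L₀(x) = ∑_{n≤x} μ(n)/n`, `L₁(x) = ∑_{n≤x} μ(n) log n / n`, `M₀(x) = ∑_{n≤x} μ(n)`,
and `Φ₁(x) = ∑_{n≤x} μ(n)(x/n)R₁(x/n)`. -/
theorem macleod_identity_one (x : ℝ) (hx : 1 ≤ x) :
    (1 - Real.eulerMascheroniConstant)
        * (∑ n ∈ Finset.Icc 1 ⌊x⌋₊, (ArithmeticFunction.moebius n : ℝ) / n)
      - (∑ n ∈ Finset.Icc 1 ⌊x⌋₊, (ArithmeticFunction.moebius n : ℝ)) / (2 * x) =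
    (∑ n ∈ Finset.Icc 1 ⌊x⌋₊, (ArithmeticFunction.moebius n : ℝ) / n) * Real.log x
      - ((∑ n ∈ Finset.Icc 1 ⌊x⌋₊, (ArithmeticFunction.moebius n : ℝ) * Real.log n / n) + 1)
      - (∑ n ∈ Finset.Icc 1 ⌊x⌋₊,
          (ArithmeticFunction.moebius n : ℝ) * (x / n) * R1 (x / n)) / x
      + 1 / x := by
  have hx0 : (0 : ℝ) < x := lt_of_lt_of_le one_pos hx
  set N := ⌊x⌋₊ with hNdef
  have hN : 1 ≤ N := Nat.le_floor (by exact_mod_cast hx)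
  set γ := Real.eulerMascheroniConstant with hγ
  -- expand each term of Φ₁
  have hexp : ∀ n ∈ Finset.Icc 1 N,
      (ArithmeticFunction.moebius n : ℝ) * (x / n) * R1 (x / n)
        = (ArithmeticFunction.moebius n : ℝ) / n * (x * (Real.log x + γ))
          - ((ArithmeticFunction.moebius n : ℝ) * Real.log n / n) * x
          - x * ((ArithmeticFunction.moebius n : ℝ) / n
              * ∑ k ∈ Finset.Icc 1 (N / n), (1 : ℝ) / k)
          - (ArithmeticFunction.moebius n : ℝ) / n * x
          + (ArithmeticFunction.moebius n : ℝ) * ((N / n : ℕ) : ℝ)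
          + (ArithmeticFunction.moebius n : ℝ) * (1 / 2) := by
    intro n hn
    simp only [Finset.mem_Icc] at hn
    have hn0 : (0 : ℝ) < n := by exact_mod_cast hn.1
    have hxn : (0 : ℝ) < x / n := div_pos hx0 hn0
    have hfloor : ⌊x / (n : ℝ)⌋₊ = N / n := Nat.floor_div_natCast x n
    have hfr : Int.fract (x / n) = x / n - ((N / n : ℕ) : ℝ) := by
      rw [Int.fract]
      congr 1
      rw [← natCast_floor_eq_intCast_floor hxn.le, hfloor]
    rw [R1, H, hfloor, hfr, Real.log_div (ne_of_gt hx0) (ne_of_gt hn0)]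
    field_simp
    ring
  rw [Finset.sum_congr rfl hexp]
  simp only [Finset.sum_add_distrib, Finset.sum_sub_distrib, ← Finset.sum_mul,
    ← Finset.mul_sum]
  rw [lemmaA N hN, lemmaB N hN]
  field_simp
  ring
end
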